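/- For Ξ̂ = 0 on a quasitriangular Lie bialgebra, the first super Jacobi identity obstruction vanishes for all v ∈ 𝔤 if and only if n⁽¹⁾⊗n⁽²⁾⊗[v,n⁽³⁾] = 0 for all v, where n = [[r₋,r₋]]. In particular, if 𝔤 is semisimple (so that the ad-action of 𝔤 on 𝔤 has no nonzero invariant vectors in the third factor only when n = 0, since r₊ is zero or nondegenerate), this happens if and only if the Lie bialgebra is triangular (r₊ = 0). -/

import Mathlib

open scoped TensorProduct

theorem stmt14_lie_sum {L M : Type*} [LieRing L] [AddCommGroup M] [LieRingModule L M]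
    (x : L) {ι : Type*} (s : Finset ι) (f : ι → M) :
    ⁅x, ∑ i ∈ s, f i⁆ = ∑ i ∈ s, ⁅x, f i⁆ := by
  induction s using Finset.cons_induction with
  | empty => simp
  | cons i s hi ih => simp [Finset.sum_cons, ih]

theorem stmt14_sum_lie {L M : Type*} [LieRing L] [AddCommGroup M] [LieRingModule L M]
    (m : M) {ι : Type*} (s : Finset ι) (f : ι → L) :
    ⁅∑ i ∈ s, f i, m⁆ = ∑ i ∈ s, ⁅f i, m⁆ := by
  induction s using Finset.cons_induction with
  | empty => simp
  | cons i s hi ih => simp [Finset.sum_cons, ih]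

/-- Theorem 4.14, second part.  `(𝔤,r)` quasitriangular with
antisymmetric part `r₋ = Σᵢ aᵢ ⊗ bᵢ` and ad-invariant symmetric part
`r₊ = Σᵢ pᵢ ⊗ qᵢ`; the Schouten element satisfies
`n = [[r₋,r₋]] = [r₊₁₂, r₊₂₃]` (hypothesis `hn`, a consequence of the classical
Yang-Baxter equation `[[r,r]] = 0`).  For the canonical preconnection
`Ξ̂ = 0` the first super Jacobi obstruction of Proposition 4.16 is exactly
`n⁽¹⁾ ⊗ n⁽²⁾ ⊗ [v,n⁽³⁾]`; hence it vanishes for all `v` if and only if this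
tensor vanishes for all `v`, and for `𝔤` semisimple this happens if and only
if the Lie bialgebra is triangular, i.e. `r₊ = 0`. -/
theorem stmt14 {L : Type*} [LieRing L] [LieAlgebra ℝ L] [FiniteDimensional ℝ L]
    [LieAlgebra.IsSemisimple ℝ L]
    (N : ℕ) (a b p q : Fin N → L)
    (hanti : (∑ i, a i ⊗ₜ[ℝ] b i) = - ∑ i, b i ⊗ₜ[ℝ] a i)
    (hsymp : (∑ i, p i ⊗ₜ[ℝ] q i) = ∑ i, q i ⊗ₜ[ℝ] p i)
    (hinvp : ∀ v : L, ⁅v, ∑ i, p i ⊗ₜ[ℝ] q i⁆ = 0)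
    (hn : (∑ i, ∑ j,
            (⁅a i, a j⁆ ⊗ₜ[ℝ] (b i ⊗ₜ[ℝ] b j)
              + a i ⊗ₜ[ℝ] (⁅b i, a j⁆ ⊗ₜ[ℝ] b j)
              + a i ⊗ₜ[ℝ] (a j ⊗ₜ[ℝ] ⁅b i, b j⁆)))
          = ∑ i, ∑ j, p i ⊗ₜ[ℝ] (⁅q i, p j⁆ ⊗ₜ[ℝ] q j)) :
    (∀ v : L,
        (∑ i, ∑ j,
          (⁅a i, a j⁆ ⊗ₜ[ℝ] (b i ⊗ₜ[ℝ] ⁅v, b j⁆)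
            + a i ⊗ₜ[ℝ] (⁅b i, a j⁆ ⊗ₜ[ℝ] ⁅v, b j⁆)
            + a i ⊗ₜ[ℝ] (a j ⊗ₜ[ℝ] ⁅v, ⁅b i, b j⁆⁆))) = 0)
    ↔ (∑ i, p i ⊗ₜ[ℝ] q i) = 0 := by
  classical
  have hM : ∀ v : L,
      (∑ i, ∑ j,
        (⁅a i, a j⁆ ⊗ₜ[ℝ] (b i ⊗ₜ[ℝ] ⁅v, b j⁆)
          + a i ⊗ₜ[ℝ] (⁅b i, a j⁆ ⊗ₜ[ℝ] ⁅v, b j⁆)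
          + a i ⊗ₜ[ℝ] (a j ⊗ₜ[ℝ] ⁅v, ⁅b i, b j⁆⁆)))
      = ∑ i, ∑ j, p i ⊗ₜ[ℝ] (⁅q i, p j⁆ ⊗ₜ[ℝ] ⁅v, q j⁆) := by
    intro v
    have := congrArg
      (TensorProduct.map (LinearMap.id (R := ℝ) (M := L))
        (TensorProduct.map (LinearMap.id (R := ℝ) (M := L)) (LieAlgebra.ad ℝ L v))) hn
    simpa [map_sum, TensorProduct.map_tmul, LieAlgebra.ad_apply] using this
  constructor
  · -- hard direction
    intro hobs
    have hobs' : ∀ v : L, (∑ i, ∑ j, p i ⊗ₜ[ℝ] (⁅q i, p j⁆ ⊗ₜ[ℝ] ⁅v, q j⁆)) = 0 := by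
      intro v; rw [← hM v]; exact hobs v
    set T : Module.Dual ℝ L →ₗ[ℝ] L :=
      ∑ i, ((LinearMap.applyₗ (p i)).smulRight (q i)) with hTdef
    have hT : ∀ f : Module.Dual ℝ L, T f = ∑ i, f (p i) • q i := by
      intro f; simp [hTdef, LinearMap.sum_apply]
    have hcenter : ∀ w : L, (∀ v : L, ⁅v, w⁆ = 0) → w = 0 := by
      intro w hw
      have hmem : w ∈ LieAlgebra.center ℝ L :=
        (LieModule.mem_maxTrivSubmodule ℝ L L w).2 hw
      rwa [LieAlgebra.center_eq_bot, LieSubmodule.mem_bot] at hmem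
    have hequi : ∀ (v : L) (f : Module.Dual ℝ L),
        ⁅v, T f⁆ = - T (f ∘ₗ (LieAlgebra.ad ℝ L v)) := by
      intro v f
      have h0 := hinvp v
      rw [stmt14_lie_sum] at h0
      simp only [TensorProduct.LieModule.lie_tmul_right] at h0
      have h1 := congrArg (TensorProduct.lift ((LinearMap.lsmul ℝ L) ∘ₗ f)) h0
      simp only [map_sum, map_add, TensorProduct.lift.tmul, LinearMap.comp_apply,
        LinearMap.lsmul_apply, map_zero, Finset.sum_add_distrib] at h1
      have h2 : ⁅v, T f⁆ = ∑ i, f (p i) • ⁅v, q i⁆ := by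
        rw [hT, stmt14_lie_sum]
        exact Finset.sum_congr rfl fun i _ => by rw [lie_smul]
      have h3 : T (f ∘ₗ (LieAlgebra.ad ℝ L v)) = ∑ i, f ⁅v, p i⁆ • q i := by
        rw [hT]; simp [LieAlgebra.ad_apply]
      rw [h2, h3, eq_neg_iff_add_eq_zero, add_comm]
      exact h1
    have habel : ∀ f g : Module.Dual ℝ L, ⁅T f, T g⁆ = 0 := by
      intro f g
      have hc : ∀ v : L, ⁅v, T (g ∘ₗ (LieAlgebra.ad ℝ L (T f)))⁆ = 0 := by
        intro v
        have h1 := congrArg (TensorProduct.lift ((LinearMap.lsmul ℝ L) ∘ₗ g) ∘ₗ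
          TensorProduct.lift ((LinearMap.lsmul ℝ (L ⊗[ℝ] L)) ∘ₗ f)) (hobs' v)
        simp only [map_sum, LinearMap.comp_apply, TensorProduct.lift.tmul,
          LinearMap.lsmul_apply, map_smul, map_zero] at h1
        -- h1 : ∑ i, ∑ j, f (p i) • (g ⁅q i, p j⁆ • ⁅v, q j⁆) = 0
        have h2 : ⁅v, T (g ∘ₗ (LieAlgebra.ad ℝ L (T f)))⁆
            = ∑ j, g ⁅T f, p j⁆ • ⁅v, q j⁆ := by
          rw [hT, stmt14_lie_sum]
          exact Finset.sum_congr rfl fun j _ => by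
            rw [lie_smul, LinearMap.comp_apply, LieAlgebra.ad_apply]
        have h3 : ∀ j, g ⁅T f, p j⁆ • ⁅v, q j⁆
            = ∑ i, f (p i) • (g ⁅q i, p j⁆ • ⁅v, q j⁆) := by
          intro j
          rw [hT, stmt14_sum_lie]
          rw [map_sum, Finset.sum_smul]
          exact Finset.sum_congr rfl fun i _ => by
            rw [smul_lie, map_smul, smul_eq_mul, mul_smul]
        rw [h2]
        calc ∑ j, g ⁅T f, p j⁆ • ⁅v, q j⁆
            = ∑ j, ∑ i, f (p i) • (g ⁅q i, p j⁆ • ⁅v, q j⁆) :=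
              Finset.sum_congr rfl fun j _ => h3 j
          _ = ∑ i, ∑ j, f (p i) • (g ⁅q i, p j⁆ • ⁅v, q j⁆) := Finset.sum_comm
          _ = 0 := h1
      have := hcenter _ hc
      rw [hequi (T f) g, this, neg_zero]
    -- the range of T is an abelian ideal, hence trivial
    let I : LieIdeal ℝ L :=
      { toSubmodule := LinearMap.range T
        lie_mem := by
          rintro x m hm
          obtain ⟨f, rfl⟩ := hm
          exact ⟨-(f ∘ₗ (LieAlgebra.ad ℝ L x)), by rw [map_neg, ← hequi]⟩ }
    haveI : IsLieAbelian I := by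
      constructor
      rintro ⟨x, hx⟩ ⟨y, hy⟩
      obtain ⟨f, rfl⟩ := hx
      obtain ⟨g, rfl⟩ := hy
      exact Subtype.ext (habel f g)
    have hbot : I = ⊥ :=
      (LieAlgebra.hasTrivialRadical_iff_no_abelian_ideals ℝ L).mp inferInstance I ‹_›
    have hTzero : ∀ f : Module.Dual ℝ L, T f = 0 := by
      intro f
      have hmem : T f ∈ I := ⟨f, rfl⟩
      rwa [hbot, LieSubmodule.mem_bot] at hmem
    -- conclude via a basis
    let B := Module.finBasis ℝ L
    calc ∑ i, p i ⊗ₜ[ℝ] q i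
        = ∑ i, (∑ k, B.repr (p i) k • B k) ⊗ₜ[ℝ] q i :=
          Finset.sum_congr rfl fun i _ => by rw [B.sum_repr (p i)]
      _ = ∑ i, ∑ k, B k ⊗ₜ[ℝ] (B.repr (p i) k • q i) := by
          simp only [TensorProduct.sum_tmul, TensorProduct.smul_tmul]
      _ = ∑ k, B k ⊗ₜ[ℝ] (∑ i, B.repr (p i) k • q i) := by
          rw [Finset.sum_comm]
          simp only [TensorProduct.tmul_sum]
      _ = 0 := by
          have hz : ∀ k, (∑ i, B.repr (p i) k • q i) = 0 := by
            intro k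
            have := hTzero (B.coord k)
            rw [hT] at this
            simpa [Module.Basis.coord_apply] using this
          simp [hz]
  · -- easy direction
    intro hr0 v
    have hinner : ∀ y : L, (∑ j, ⁅y, p j⁆ ⊗ₜ[ℝ] q j) = 0 := by
      intro y
      have := congrArg
        (TensorProduct.map (LieAlgebra.ad ℝ L y) (LinearMap.id (R := ℝ) (M := L))) hr0
      simpa [map_sum, TensorProduct.map_tmul, LieAlgebra.ad_apply] using this
    have hrhs : (∑ i, ∑ j, p i ⊗ₜ[ℝ] (⁅q i, p j⁆ ⊗ₜ[ℝ] q j)) = 0 := by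
      calc (∑ i, ∑ j, p i ⊗ₜ[ℝ] (⁅q i, p j⁆ ⊗ₜ[ℝ] q j))
          = ∑ i, p i ⊗ₜ[ℝ] (∑ j, ⁅q i, p j⁆ ⊗ₜ[ℝ] q j) := by
            simp [TensorProduct.tmul_sum]
        _ = 0 := by simp [hinner]
    rw [hM v]
    have := congrArg
      (TensorProduct.map (LinearMap.id (R := ℝ) (M := L))
        (TensorProduct.map (LinearMap.id (R := ℝ) (M := L)) (LieAlgebra.ad ℝ L v))) hrhs
    simpa [map_sum, TensorProduct.map_tmul, LieAlgebra.ad_apply] using this
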